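/- For the three-web on the domain {(x¹,x²,y¹,y²) ∈ ℝ⁴ : y¹ ≠ −1, y² ≠ −1, x¹x² ≠ 1} given by f¹ = x¹ + y¹ + x¹y², f² = x² + y² + x²y¹, write a₁ = 1/((1+y¹)(1−x¹x²)) and a₂ = 1/((1+y²)(1−x¹x²)) for the components of its torsion covector. Then the covariant derivatives satisfy p₁₁ = p₂₂ = 0, p₁₂ = q₁₂ = a₁(a₁x¹ + a₂), p₂₁ = q₂₁ = a₂(a₂x² + a₁), q₁₁ = −a₁(a₂x² + a₁), q₂₂ = −a₂(a₁x¹ + a₂), and hence the isoclinicity invariants satisfy p = q = (a₁²x¹ − a₂²x²)/2 (so this web belongs to the classes E₁₃₁ and G₃). -/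

import Mathlib

noncomputable section

open Matrix

/-- Partial derivative of `g` with respect to the `j`-th coordinate at the point `x`. -/
def pd (j : Fin 2) (g : (Fin 2 → ℝ) → ℝ) (x : Fin 2 → ℝ) : ℝ :=
  deriv (fun t => g (Function.update x j t)) (x j)

variable (f : Fin 2 → (Fin 2 → ℝ) → (Fin 2 → ℝ) → ℝ)

/-- Jacobian matrix `f̄ = (∂fⁱ/∂xʲ)` with respect to the first group of variables. -/
def fbar (x y : Fin 2 → ℝ) : Matrix (Fin 2) (Fin 2) ℝ :=
  Matrix.of fun i j => pd j (fun x' => f i x' y) x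

/-- Jacobian matrix `f̃ = (∂fⁱ/∂yʲ)` with respect to the second group of variables. -/
def ftil (x y : Fin 2 → ℝ) : Matrix (Fin 2) (Fin 2) ℝ :=
  Matrix.of fun i j => pd j (fun y' => f i x y') y

/-- Mixed second partial derivative `∂²fⁱ/∂xˡ∂yᵐ`. -/
def d2 (i l m : Fin 2) (x y : Fin 2 → ℝ) : ℝ :=
  pd m (fun y' => pd l (fun x' => f i x' y') x) y

/-- Connection coefficients
`Γⁱⱼₖ = −∑_{l,m} (∂²fⁱ/∂xˡ∂yᵐ) ḡˡⱼ g̃ᵐₖ`, where `ḡ = f̄⁻¹`, `g̃ = f̃⁻¹`. -/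
def Gam (i j k : Fin 2) (x y : Fin 2 → ℝ) : ℝ :=
  - ∑ l : Fin 2, ∑ m : Fin 2,
      d2 f i l m x y * (fbar f x y)⁻¹ l j * (ftil f x y)⁻¹ m k

/-- Torsion covector `aⱼ = ∑ₖ (Γᵏⱼₖ − Γᵏₖⱼ)`. -/
def aCov (j : Fin 2) (x y : Fin 2 → ℝ) : ℝ :=
  ∑ k : Fin 2, (Gam f k j k x y - Gam f k k j x y)

/-- Covariant derivative `p_{ik} = ∑ₘ (∂aᵢ/∂xᵐ) ḡᵐₖ − ∑ⱼ aⱼ Γʲₖᵢ`. -/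
def pCov (i k : Fin 2) (x y : Fin 2 → ℝ) : ℝ :=
  (∑ m : Fin 2, pd m (fun x' => aCov f i x' y) x * (fbar f x y)⁻¹ m k)
    - ∑ j : Fin 2, aCov f j x y * Gam f j k i x y

/-- Covariant derivative `q_{ik} = ∑ₘ (∂aᵢ/∂yᵐ) g̃ᵐₖ − ∑ⱼ aⱼ Γʲᵢₖ`. -/
def qCov (i k : Fin 2) (x y : Fin 2 → ℝ) : ℝ :=
  (∑ m : Fin 2, pd m (fun y' => aCov f i x y') y * (ftil f x y)⁻¹ m k)
    - ∑ j : Fin 2, aCov f j x y * Gam f j i k x y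

/-- Isoclinicity invariant `p = (p₁₂ − p₂₁)/2`. -/
def pIso (x y : Fin 2 → ℝ) : ℝ := (pCov f 0 1 x y - pCov f 1 0 x y) / 2

/-- Isoclinicity invariant `q = (q₁₂ − q₂₁)/2`. -/
def qIso (x y : Fin 2 → ℝ) : ℝ := (qCov f 0 1 x y - qCov f 1 0 x y) / 2


/-- The web `f¹ = x¹ + y¹ + x¹y²`, `f² = x² + y² + x²y¹`.
(Indices: `x 0 ↦ x¹`, `x 1 ↦ x²`, `y 0 ↦ y¹`, `y 1 ↦ y²`.) -/
noncomputable def webE : Fin 2 → (Fin 2 → ℝ) → (Fin 2 → ℝ) → ℝ :=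
  ![fun x y => x 0 + y 0 + x 0 * y 1,
    fun x y => x 1 + y 1 + x 1 * y 0]


/-! ### Auxiliary lemmas for the proof -/

section Aux

variable (x y : Fin 2 → ℝ)

lemma pd_webE_x00 : pd 0 (fun x' => webE 0 x' y) x = 1 + y 1 := by
  simp only [pd, webE, Matrix.cons_val_zero, Function.update_apply]
  norm_num

lemma pd_webE_x01 : pd 1 (fun x' => webE 0 x' y) x = 0 := by
  simp only [pd, webE, Matrix.cons_val_zero, Function.update_apply]
  norm_num

lemma pd_webE_x10 : pd 0 (fun x' => webE 1 x' y) x = 0 := by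
  simp only [pd, webE, Matrix.cons_val_one, Matrix.head_cons, Function.update_apply]
  norm_num

lemma pd_webE_x11 : pd 1 (fun x' => webE 1 x' y) x = 1 + y 0 := by
  simp only [pd, webE, Matrix.cons_val_one, Matrix.head_cons, Function.update_apply]
  norm_num

lemma pd_webE_y00 : pd 0 (fun y' => webE 0 x y') y = 1 := by
  simp only [pd, webE, Matrix.cons_val_zero, Function.update_apply]
  have : HasDerivAt (fun t : ℝ => x 0 + t + x 0 * y 1) 1 (y 0) := by
    simpa using ((hasDerivAt_id (y 0)).const_add (x 0)).add_const (x 0 * y 1)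
  simpa using this.deriv

lemma pd_webE_y01 : pd 1 (fun y' => webE 0 x y') y = x 0 := by
  simp only [pd, webE, Matrix.cons_val_zero, Function.update_apply]
  have : HasDerivAt (fun t : ℝ => x 0 + y 0 + x 0 * t) (x 0) (y 1) := by
    simpa using (((hasDerivAt_id (y 1)).const_mul (x 0)).const_add (x 0 + y 0))
  simpa using this.deriv

lemma pd_webE_y10 : pd 0 (fun y' => webE 1 x y') y = x 1 := by
  simp only [pd, webE, Matrix.cons_val_one, Matrix.head_cons, Function.update_apply]
  have : HasDerivAt (fun t : ℝ => x 1 + y 1 + x 1 * t) (x 1) (y 0) := by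
    simpa using (((hasDerivAt_id (y 0)).const_mul (x 1)).const_add (x 1 + y 1))
  simpa using this.deriv

lemma pd_webE_y11 : pd 1 (fun y' => webE 1 x y') y = 1 := by
  simp only [pd, webE, Matrix.cons_val_one, Matrix.head_cons, Function.update_apply]
  have : HasDerivAt (fun t : ℝ => x 1 + t + x 1 * y 0) 1 (y 1) := by
    simpa using ((hasDerivAt_id (y 1)).const_add (x 1)).add_const (x 1 * y 0)
  simpa using this.deriv

lemma fbar_webE : fbar webE x y = !![1 + y 1, 0; 0, 1 + y 0] := by
  ext i j
  fin_cases i <;> fin_cases j <;>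
    simp [fbar, pd_webE_x00, pd_webE_x01, pd_webE_x10, pd_webE_x11]

lemma ftil_webE : ftil webE x y = !![1, x 0; x 1, 1] := by
  ext i j
  fin_cases i <;> fin_cases j <;>
    simp [ftil, pd_webE_y00, pd_webE_y01, pd_webE_y10, pd_webE_y11]

lemma fbar_inv_webE (hu : (1:ℝ) + y 0 ≠ 0) (hv : (1:ℝ) + y 1 ≠ 0) :
    (fbar webE x y)⁻¹ = !![(1 + y 1)⁻¹, 0; 0, (1 + y 0)⁻¹] := by
  rw [fbar_webE]
  apply Matrix.inv_eq_right_inv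
  ext i j; fin_cases i <;> fin_cases j <;>
    simp [Matrix.mul_apply, Fin.sum_univ_two] <;> field_simp

lemma ftil_inv_webE (hD : (1:ℝ) - x 0 * x 1 ≠ 0) :
    (ftil webE x y)⁻¹ = !![(1 - x 0 * x 1)⁻¹, -(x 0) * (1 - x 0 * x 1)⁻¹;
                          -(x 1) * (1 - x 0 * x 1)⁻¹, (1 - x 0 * x 1)⁻¹] := by
  have hD' : (1:ℝ) - x 1 * x 0 ≠ 0 := by rwa [mul_comm]
  rw [ftil_webE]
  apply Matrix.inv_eq_right_inv
  ext i j; fin_cases i <;> fin_cases j <;>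
    simp [Matrix.mul_apply, Fin.sum_univ_two] <;> field_simp <;> ring

lemma d2_webE_000 : d2 webE 0 0 0 x y = 0 := by
  have h : (fun y' => pd 0 (fun x' => webE 0 x' y') x) = fun y' : Fin 2 → ℝ => 1 + y' 1 :=
    funext fun y' => pd_webE_x00 x y'
  simp only [d2]; rw [h]
  simp only [pd, Function.update_apply]; norm_num

lemma d2_webE_001 : d2 webE 0 0 1 x y = 1 := by
  have h : (fun y' => pd 0 (fun x' => webE 0 x' y') x) = fun y' : Fin 2 → ℝ => 1 + y' 1 :=
    funext fun y' => pd_webE_x00 x y'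
  simp only [d2]; rw [h]
  simp only [pd, Function.update_apply]
  norm_num

lemma d2_webE_01m (m : Fin 2) : d2 webE 0 1 m x y = 0 := by
  have h : (fun y' => pd 1 (fun x' => webE 0 x' y') x) = fun _ : Fin 2 → ℝ => (0:ℝ) :=
    funext fun y' => pd_webE_x01 x y'
  simp only [d2]; rw [h]
  simp [pd]

lemma d2_webE_10m (m : Fin 2) : d2 webE 1 0 m x y = 0 := by
  have h : (fun y' => pd 0 (fun x' => webE 1 x' y') x) = fun _ : Fin 2 → ℝ => (0:ℝ) :=
    funext fun y' => pd_webE_x10 x y'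
  simp only [d2]; rw [h]
  simp [pd]

lemma d2_webE_110 : d2 webE 1 1 0 x y = 1 := by
  have h : (fun y' => pd 1 (fun x' => webE 1 x' y') x) = fun y' : Fin 2 → ℝ => 1 + y' 0 :=
    funext fun y' => pd_webE_x11 x y'
  simp only [d2]; rw [h]
  simp only [pd, Function.update_apply]
  norm_num

lemma d2_webE_111 : d2 webE 1 1 1 x y = 0 := by
  have h : (fun y' => pd 1 (fun x' => webE 1 x' y') x) = fun y' : Fin 2 → ℝ => 1 + y' 0 :=
    funext fun y' => pd_webE_x11 x y'
  simp only [d2]; rw [h]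
  simp only [pd, Function.update_apply]; norm_num

lemma Gam_webE_000 (hu : (1:ℝ) + y 0 ≠ 0) (hv : (1:ℝ) + y 1 ≠ 0)
    (hD : (1:ℝ) - x 0 * x 1 ≠ 0) :
    Gam webE 0 0 0 x y = x 1 * ((1 + y 1) * (1 - x 0 * x 1))⁻¹ := by
  simp only [Gam, Fin.sum_univ_two, fbar_inv_webE x y hu hv, ftil_inv_webE x y hD,
    d2_webE_000, d2_webE_001, d2_webE_01m]
  simp; field_simp

lemma Gam_webE_001 (hu : (1:ℝ) + y 0 ≠ 0) (hv : (1:ℝ) + y 1 ≠ 0)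
    (hD : (1:ℝ) - x 0 * x 1 ≠ 0) :
    Gam webE 0 0 1 x y = -((1 + y 1) * (1 - x 0 * x 1))⁻¹ := by
  simp only [Gam, Fin.sum_univ_two, fbar_inv_webE x y hu hv, ftil_inv_webE x y hD,
    d2_webE_000, d2_webE_001, d2_webE_01m]
  simp; field_simp

lemma Gam_webE_01k (hu : (1:ℝ) + y 0 ≠ 0) (hv : (1:ℝ) + y 1 ≠ 0)
    (hD : (1:ℝ) - x 0 * x 1 ≠ 0) (k : Fin 2) :
    Gam webE 0 1 k x y = 0 := by
  simp only [Gam, Fin.sum_univ_two, fbar_inv_webE x y hu hv, ftil_inv_webE x y hD,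
    d2_webE_000, d2_webE_001, d2_webE_01m]
  simp

lemma Gam_webE_10k (hu : (1:ℝ) + y 0 ≠ 0) (hv : (1:ℝ) + y 1 ≠ 0)
    (hD : (1:ℝ) - x 0 * x 1 ≠ 0) (k : Fin 2) :
    Gam webE 1 0 k x y = 0 := by
  simp only [Gam, Fin.sum_univ_two, fbar_inv_webE x y hu hv, ftil_inv_webE x y hD,
    d2_webE_10m, d2_webE_110, d2_webE_111]
  simp

lemma Gam_webE_110 (hu : (1:ℝ) + y 0 ≠ 0) (hv : (1:ℝ) + y 1 ≠ 0)
    (hD : (1:ℝ) - x 0 * x 1 ≠ 0) :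
    Gam webE 1 1 0 x y = -((1 + y 0) * (1 - x 0 * x 1))⁻¹ := by
  simp only [Gam, Fin.sum_univ_two, fbar_inv_webE x y hu hv, ftil_inv_webE x y hD,
    d2_webE_10m, d2_webE_110, d2_webE_111]
  simp; field_simp

lemma Gam_webE_111 (hu : (1:ℝ) + y 0 ≠ 0) (hv : (1:ℝ) + y 1 ≠ 0)
    (hD : (1:ℝ) - x 0 * x 1 ≠ 0) :
    Gam webE 1 1 1 x y = x 0 * ((1 + y 0) * (1 - x 0 * x 1))⁻¹ := by
  simp only [Gam, Fin.sum_univ_two, fbar_inv_webE x y hu hv, ftil_inv_webE x y hD,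
    d2_webE_10m, d2_webE_110, d2_webE_111]
  simp; field_simp

lemma aCov_webE_0 (hu : (1:ℝ) + y 0 ≠ 0) (hv : (1:ℝ) + y 1 ≠ 0)
    (hD : (1:ℝ) - x 0 * x 1 ≠ 0) :
    aCov webE 0 x y = ((1 + y 0) * (1 - x 0 * x 1))⁻¹ := by
  simp only [aCov, Fin.sum_univ_two, Gam_webE_000 x y hu hv hD,
    Gam_webE_10k x y hu hv hD, Gam_webE_110 x y hu hv hD]
  ring

lemma aCov_webE_1 (hu : (1:ℝ) + y 0 ≠ 0) (hv : (1:ℝ) + y 1 ≠ 0)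
    (hD : (1:ℝ) - x 0 * x 1 ≠ 0) :
    aCov webE 1 x y = ((1 + y 1) * (1 - x 0 * x 1))⁻¹ := by
  simp only [aCov, Fin.sum_univ_two, Gam_webE_001 x y hu hv hD,
    Gam_webE_01k x y hu hv hD, Gam_webE_111 x y hu hv hD]
  ring

end Aux

section Aux2

variable (x y : Fin 2 → ℝ)

lemma pdx_a0_0 (h1 : y 0 ≠ -1) (h2 : y 1 ≠ -1) (h3 : x 0 * x 1 ≠ 1) :
    pd 0 (fun x' => aCov webE 0 x' y) x
      = (1 + y 0) * x 1 / ((1 + y 0) * (1 - x 0 * x 1))^2 := by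
  have hu : (1:ℝ) + y 0 ≠ 0 := fun h => h1 (by linarith)
  have hv : (1:ℝ) + y 1 ≠ 0 := fun h => h2 (by linarith)
  have hD : (1:ℝ) - x 0 * x 1 ≠ 0 := sub_ne_zero_of_ne (Ne.symm h3)
  simp only [pd]
  have hev : (fun t => aCov webE 0 (Function.update x 0 t) y) =ᶠ[nhds (x 0)]
      fun t => ((1 + y 0) * (1 - t * x 1))⁻¹ := by
    filter_upwards [(continuous_id.mul continuous_const).continuousAt.eventually_ne h3]
      with t ht
    have hD' : (1:ℝ) - Function.update x 0 t 0 * Function.update x 0 t 1 ≠ 0 := by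
      simpa [Function.update_apply] using sub_ne_zero_of_ne (Ne.symm ht)
    rw [aCov_webE_0 _ y hu hv hD']
    simp [Function.update_apply]
  rw [hev.deriv_eq]
  have hd : HasDerivAt (fun t => (1 + y 0) * (1 - t * x 1)) ((1 + y 0) * -(1 * x 1)) (x 0) := by
    simpa using (((hasDerivAt_id (x 0)).mul_const (x 1)).const_sub 1).const_mul (1 + y 0)
  rw [deriv_fun_inv'' hd.differentiableAt (mul_ne_zero hu hD), hd.deriv]
  ring

lemma pdx_a0_1 (h1 : y 0 ≠ -1) (h2 : y 1 ≠ -1) (h3 : x 0 * x 1 ≠ 1) :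
    pd 1 (fun x' => aCov webE 0 x' y) x
      = (1 + y 0) * x 0 / ((1 + y 0) * (1 - x 0 * x 1))^2 := by
  have hu : (1:ℝ) + y 0 ≠ 0 := fun h => h1 (by linarith)
  have hv : (1:ℝ) + y 1 ≠ 0 := fun h => h2 (by linarith)
  have hD : (1:ℝ) - x 0 * x 1 ≠ 0 := sub_ne_zero_of_ne (Ne.symm h3)
  simp only [pd]
  have hev : (fun t => aCov webE 0 (Function.update x 1 t) y) =ᶠ[nhds (x 1)]
      fun t => ((1 + y 0) * (1 - x 0 * t))⁻¹ := by
    filter_upwards [(continuous_const.mul continuous_id).continuousAt.eventually_ne h3]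
      with t ht
    have hD' : (1:ℝ) - Function.update x 1 t 0 * Function.update x 1 t 1 ≠ 0 := by
      simpa [Function.update_apply] using sub_ne_zero_of_ne (Ne.symm ht)
    rw [aCov_webE_0 _ y hu hv hD']
    simp [Function.update_apply]
  rw [hev.deriv_eq]
  have hd : HasDerivAt (fun t => (1 + y 0) * (1 - x 0 * t)) ((1 + y 0) * -(x 0 * 1)) (x 1) := by
    simpa using (((hasDerivAt_id (x 1)).const_mul (x 0)).const_sub 1).const_mul (1 + y 0)
  rw [deriv_fun_inv'' hd.differentiableAt (mul_ne_zero hu hD), hd.deriv]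
  ring

lemma pdx_a1_0 (h1 : y 0 ≠ -1) (h2 : y 1 ≠ -1) (h3 : x 0 * x 1 ≠ 1) :
    pd 0 (fun x' => aCov webE 1 x' y) x
      = (1 + y 1) * x 1 / ((1 + y 1) * (1 - x 0 * x 1))^2 := by
  have hu : (1:ℝ) + y 0 ≠ 0 := fun h => h1 (by linarith)
  have hv : (1:ℝ) + y 1 ≠ 0 := fun h => h2 (by linarith)
  have hD : (1:ℝ) - x 0 * x 1 ≠ 0 := sub_ne_zero_of_ne (Ne.symm h3)
  simp only [pd]
  have hev : (fun t => aCov webE 1 (Function.update x 0 t) y) =ᶠ[nhds (x 0)]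
      fun t => ((1 + y 1) * (1 - t * x 1))⁻¹ := by
    filter_upwards [(continuous_id.mul continuous_const).continuousAt.eventually_ne h3]
      with t ht
    have hD' : (1:ℝ) - Function.update x 0 t 0 * Function.update x 0 t 1 ≠ 0 := by
      simpa [Function.update_apply] using sub_ne_zero_of_ne (Ne.symm ht)
    rw [aCov_webE_1 _ y hu hv hD']
    simp [Function.update_apply]
  rw [hev.deriv_eq]
  have hd : HasDerivAt (fun t => (1 + y 1) * (1 - t * x 1)) ((1 + y 1) * -(1 * x 1)) (x 0) := by
    simpa using (((hasDerivAt_id (x 0)).mul_const (x 1)).const_sub 1).const_mul (1 + y 1)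
  rw [deriv_fun_inv'' hd.differentiableAt (mul_ne_zero hv hD), hd.deriv]
  ring

lemma pdx_a1_1 (h1 : y 0 ≠ -1) (h2 : y 1 ≠ -1) (h3 : x 0 * x 1 ≠ 1) :
    pd 1 (fun x' => aCov webE 1 x' y) x
      = (1 + y 1) * x 0 / ((1 + y 1) * (1 - x 0 * x 1))^2 := by
  have hu : (1:ℝ) + y 0 ≠ 0 := fun h => h1 (by linarith)
  have hv : (1:ℝ) + y 1 ≠ 0 := fun h => h2 (by linarith)
  have hD : (1:ℝ) - x 0 * x 1 ≠ 0 := sub_ne_zero_of_ne (Ne.symm h3)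
  simp only [pd]
  have hev : (fun t => aCov webE 1 (Function.update x 1 t) y) =ᶠ[nhds (x 1)]
      fun t => ((1 + y 1) * (1 - x 0 * t))⁻¹ := by
    filter_upwards [(continuous_const.mul continuous_id).continuousAt.eventually_ne h3]
      with t ht
    have hD' : (1:ℝ) - Function.update x 1 t 0 * Function.update x 1 t 1 ≠ 0 := by
      simpa [Function.update_apply] using sub_ne_zero_of_ne (Ne.symm ht)
    rw [aCov_webE_1 _ y hu hv hD']
    simp [Function.update_apply]
  rw [hev.deriv_eq]
  have hd : HasDerivAt (fun t => (1 + y 1) * (1 - x 0 * t)) ((1 + y 1) * -(x 0 * 1)) (x 1) := by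
    simpa using (((hasDerivAt_id (x 1)).const_mul (x 0)).const_sub 1).const_mul (1 + y 1)
  rw [deriv_fun_inv'' hd.differentiableAt (mul_ne_zero hv hD), hd.deriv]
  ring

lemma pdy_a0_0 (h1 : y 0 ≠ -1) (h2 : y 1 ≠ -1) (h3 : x 0 * x 1 ≠ 1) :
    pd 0 (fun y' => aCov webE 0 x y') y
      = -((1 - x 0 * x 1)) / ((1 + y 0) * (1 - x 0 * x 1))^2 := by
  have hu : (1:ℝ) + y 0 ≠ 0 := fun h => h1 (by linarith)
  have hv : (1:ℝ) + y 1 ≠ 0 := fun h => h2 (by linarith)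
  have hD : (1:ℝ) - x 0 * x 1 ≠ 0 := sub_ne_zero_of_ne (Ne.symm h3)
  simp only [pd]
  have hev : (fun t => aCov webE 0 x (Function.update y 0 t)) =ᶠ[nhds (y 0)]
      fun t => ((1 + t) * (1 - x 0 * x 1))⁻¹ := by
    filter_upwards [(continuous_const.add continuous_id).continuousAt.eventually_ne hu]
      with t ht
    have hu' : (1:ℝ) + Function.update y 0 t 0 ≠ 0 := by
      simpa [Function.update_apply] using ht
    have hv' : (1:ℝ) + Function.update y 0 t 1 ≠ 0 := by
      simpa [Function.update_apply] using hv
    rw [aCov_webE_0 x _ hu' hv' hD]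
    simp [Function.update_apply]
  rw [hev.deriv_eq]
  have hd : HasDerivAt (fun t : ℝ => (1 + t) * (1 - x 0 * x 1)) (1 * (1 - x 0 * x 1)) (y 0) := by
    simpa using ((hasDerivAt_id (y 0)).const_add 1).mul_const (1 - x 0 * x 1)
  rw [deriv_fun_inv'' hd.differentiableAt (mul_ne_zero hu hD), hd.deriv]
  ring

lemma pdy_a0_1 (h1 : y 0 ≠ -1) (h2 : y 1 ≠ -1) (h3 : x 0 * x 1 ≠ 1) :
    pd 1 (fun y' => aCov webE 0 x y') y = 0 := by
  have hu : (1:ℝ) + y 0 ≠ 0 := fun h => h1 (by linarith)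
  have hv : (1:ℝ) + y 1 ≠ 0 := fun h => h2 (by linarith)
  have hD : (1:ℝ) - x 0 * x 1 ≠ 0 := sub_ne_zero_of_ne (Ne.symm h3)
  simp only [pd]
  have hev : (fun t => aCov webE 0 x (Function.update y 1 t)) =ᶠ[nhds (y 1)]
      fun _ => ((1 + y 0) * (1 - x 0 * x 1))⁻¹ := by
    filter_upwards [(continuous_const.add continuous_id).continuousAt.eventually_ne hv]
      with t ht
    have hu' : (1:ℝ) + Function.update y 1 t 0 ≠ 0 := by
      simpa [Function.update_apply] using hu
    have hv' : (1:ℝ) + Function.update y 1 t 1 ≠ 0 := by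
      simpa [Function.update_apply] using ht
    rw [aCov_webE_0 x _ hu' hv' hD]
    simp [Function.update_apply]
  rw [hev.deriv_eq, deriv_const]

lemma pdy_a1_0 (h1 : y 0 ≠ -1) (h2 : y 1 ≠ -1) (h3 : x 0 * x 1 ≠ 1) :
    pd 0 (fun y' => aCov webE 1 x y') y = 0 := by
  have hu : (1:ℝ) + y 0 ≠ 0 := fun h => h1 (by linarith)
  have hv : (1:ℝ) + y 1 ≠ 0 := fun h => h2 (by linarith)
  have hD : (1:ℝ) - x 0 * x 1 ≠ 0 := sub_ne_zero_of_ne (Ne.symm h3)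
  simp only [pd]
  have hev : (fun t => aCov webE 1 x (Function.update y 0 t)) =ᶠ[nhds (y 0)]
      fun _ => ((1 + y 1) * (1 - x 0 * x 1))⁻¹ := by
    filter_upwards [(continuous_const.add continuous_id).continuousAt.eventually_ne hu]
      with t ht
    have hu' : (1:ℝ) + Function.update y 0 t 0 ≠ 0 := by
      simpa [Function.update_apply] using ht
    have hv' : (1:ℝ) + Function.update y 0 t 1 ≠ 0 := by
      simpa [Function.update_apply] using hv
    rw [aCov_webE_1 x _ hu' hv' hD]
    simp [Function.update_apply]
  rw [hev.deriv_eq, deriv_const]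

lemma pdy_a1_1 (h1 : y 0 ≠ -1) (h2 : y 1 ≠ -1) (h3 : x 0 * x 1 ≠ 1) :
    pd 1 (fun y' => aCov webE 1 x y') y
      = -((1 - x 0 * x 1)) / ((1 + y 1) * (1 - x 0 * x 1))^2 := by
  have hu : (1:ℝ) + y 0 ≠ 0 := fun h => h1 (by linarith)
  have hv : (1:ℝ) + y 1 ≠ 0 := fun h => h2 (by linarith)
  have hD : (1:ℝ) - x 0 * x 1 ≠ 0 := sub_ne_zero_of_ne (Ne.symm h3)
  simp only [pd]
  have hev : (fun t => aCov webE 1 x (Function.update y 1 t)) =ᶠ[nhds (y 1)]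
      fun t => ((1 + t) * (1 - x 0 * x 1))⁻¹ := by
    filter_upwards [(continuous_const.add continuous_id).continuousAt.eventually_ne hv]
      with t ht
    have hu' : (1:ℝ) + Function.update y 1 t 0 ≠ 0 := by
      simpa [Function.update_apply] using hu
    have hv' : (1:ℝ) + Function.update y 1 t 1 ≠ 0 := by
      simpa [Function.update_apply] using ht
    rw [aCov_webE_1 x _ hu' hv' hD]
    simp [Function.update_apply]
  rw [hev.deriv_eq]
  have hd : HasDerivAt (fun t : ℝ => (1 + t) * (1 - x 0 * x 1)) (1 * (1 - x 0 * x 1)) (y 1) := by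
    simpa using ((hasDerivAt_id (y 1)).const_add 1).mul_const (1 - x 0 * x 1)
  rw [deriv_fun_inv'' hd.differentiableAt (mul_ne_zero hv hD), hd.deriv]
  ring

end Aux2


set_option maxHeartbeats 1600000 in
/-- For the web `webE` on the domain `y¹ ≠ −1, y² ≠ −1, x¹x² ≠ 1`, writing
`a₁ = 1/((1+y¹)(1−x¹x²))` and `a₂ = 1/((1+y²)(1−x¹x²))` for the components of
its torsion covector, the covariant derivatives satisfy
`p₁₁ = p₂₂ = 0`, `p₁₂ = q₁₂ = a₁(a₁x¹ + a₂)`, `p₂₁ = q₂₁ = a₂(a₂x² + a₁)`,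
`q₁₁ = −a₁(a₂x² + a₁)`, `q₂₂ = −a₂(a₁x¹ + a₂)`, and the isoclinicity
invariants satisfy `p = q = (a₁²x¹ − a₂²x²)/2` (classes E₁₃₁ and G₃). -/
theorem webE_covariant_derivatives (x y : Fin 2 → ℝ)
    (h1 : y 0 ≠ -1) (h2 : y 1 ≠ -1) (h3 : x 0 * x 1 ≠ 1)
    (a₁ a₂ : ℝ)
    (ha₁ : a₁ = 1 / ((1 + y 0) * (1 - x 0 * x 1)))
    (ha₂ : a₂ = 1 / ((1 + y 1) * (1 - x 0 * x 1))) :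
    pCov webE 0 0 x y = 0 ∧ pCov webE 1 1 x y = 0 ∧
    pCov webE 0 1 x y = a₁ * (a₁ * x 0 + a₂) ∧
    qCov webE 0 1 x y = a₁ * (a₁ * x 0 + a₂) ∧
    pCov webE 1 0 x y = a₂ * (a₂ * x 1 + a₁) ∧
    qCov webE 1 0 x y = a₂ * (a₂ * x 1 + a₁) ∧
    qCov webE 0 0 x y = -(a₁ * (a₂ * x 1 + a₁)) ∧
    qCov webE 1 1 x y = -(a₂ * (a₁ * x 0 + a₂)) ∧
    pIso webE x y = (a₁^2 * x 0 - a₂^2 * x 1) / 2 ∧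
    qIso webE x y = (a₁^2 * x 0 - a₂^2 * x 1) / 2 := by
  have hu : (1:ℝ) + y 0 ≠ 0 := fun h => h1 (by linarith)
  have hv : (1:ℝ) + y 1 ≠ 0 := fun h => h2 (by linarith)
  have hD : (1:ℝ) - x 0 * x 1 ≠ 0 := sub_ne_zero_of_ne (Ne.symm h3)
  subst ha₁ ha₂
  have P00 : pCov webE 0 0 x y = 0 := by
    simp only [pCov]
    simp only [Fin.sum_univ_two, pdx_a0_0 x y h1 h2 h3, pdx_a0_1 x y h1 h2 h3,
      fbar_inv_webE x y hu hv, aCov_webE_0 x y hu hv hD, aCov_webE_1 x y hu hv hD,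
      Gam_webE_000 x y hu hv hD, Gam_webE_10k x y hu hv hD,
      Matrix.cons_val', Matrix.cons_val_zero, Matrix.cons_val_one,
      Matrix.head_cons, Matrix.empty_val', Matrix.cons_val_fin_one, Matrix.head_fin_const, Matrix.of_apply]
    field_simp
    ring
  have P11 : pCov webE 1 1 x y = 0 := by
    simp only [pCov]
    simp only [Fin.sum_univ_two, pdx_a1_0 x y h1 h2 h3, pdx_a1_1 x y h1 h2 h3,
      fbar_inv_webE x y hu hv, aCov_webE_0 x y hu hv hD, aCov_webE_1 x y hu hv hD,
      Gam_webE_01k x y hu hv hD, Gam_webE_111 x y hu hv hD,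
      Matrix.cons_val', Matrix.cons_val_zero, Matrix.cons_val_one,
      Matrix.head_cons, Matrix.empty_val', Matrix.cons_val_fin_one, Matrix.head_fin_const, Matrix.of_apply]
    field_simp
    ring
  have P01 : pCov webE 0 1 x y =
      (1 / ((1 + y 0) * (1 - x 0 * x 1))) *
        ((1 / ((1 + y 0) * (1 - x 0 * x 1))) * x 0 + 1 / ((1 + y 1) * (1 - x 0 * x 1))) := by
    simp only [pCov]
    simp only [Fin.sum_univ_two, pdx_a0_0 x y h1 h2 h3, pdx_a0_1 x y h1 h2 h3,
      fbar_inv_webE x y hu hv, aCov_webE_0 x y hu hv hD, aCov_webE_1 x y hu hv hD,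
      Gam_webE_01k x y hu hv hD, Gam_webE_110 x y hu hv hD,
      Matrix.cons_val', Matrix.cons_val_zero, Matrix.cons_val_one,
      Matrix.head_cons, Matrix.empty_val', Matrix.cons_val_fin_one, Matrix.head_fin_const, Matrix.of_apply]
    field_simp
    ring
  have P10 : pCov webE 1 0 x y =
      (1 / ((1 + y 1) * (1 - x 0 * x 1))) *
        ((1 / ((1 + y 1) * (1 - x 0 * x 1))) * x 1 + 1 / ((1 + y 0) * (1 - x 0 * x 1))) := by
    simp only [pCov]
    simp only [Fin.sum_univ_two, pdx_a1_0 x y h1 h2 h3, pdx_a1_1 x y h1 h2 h3,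
      fbar_inv_webE x y hu hv, aCov_webE_0 x y hu hv hD, aCov_webE_1 x y hu hv hD,
      Gam_webE_001 x y hu hv hD, Gam_webE_10k x y hu hv hD,
      Matrix.cons_val', Matrix.cons_val_zero, Matrix.cons_val_one,
      Matrix.head_cons, Matrix.empty_val', Matrix.cons_val_fin_one, Matrix.head_fin_const, Matrix.of_apply]
    field_simp
    ring
  have Q01 : qCov webE 0 1 x y =
      (1 / ((1 + y 0) * (1 - x 0 * x 1))) *
        ((1 / ((1 + y 0) * (1 - x 0 * x 1))) * x 0 + 1 / ((1 + y 1) * (1 - x 0 * x 1))) := by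
    simp only [qCov]
    simp only [Fin.sum_univ_two, pdy_a0_0 x y h1 h2 h3, pdy_a0_1 x y h1 h2 h3,
      ftil_inv_webE x y hD, aCov_webE_0 x y hu hv hD, aCov_webE_1 x y hu hv hD,
      Gam_webE_001 x y hu hv hD, Gam_webE_10k x y hu hv hD,
      Matrix.cons_val', Matrix.cons_val_zero, Matrix.cons_val_one,
      Matrix.head_cons, Matrix.empty_val', Matrix.cons_val_fin_one, Matrix.head_fin_const, Matrix.of_apply]
    field_simp
    ring
  have Q10 : qCov webE 1 0 x y =
      (1 / ((1 + y 1) * (1 - x 0 * x 1))) *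
        ((1 / ((1 + y 1) * (1 - x 0 * x 1))) * x 1 + 1 / ((1 + y 0) * (1 - x 0 * x 1))) := by
    simp only [qCov]
    simp only [Fin.sum_univ_two, pdy_a1_0 x y h1 h2 h3, pdy_a1_1 x y h1 h2 h3,
      ftil_inv_webE x y hD, aCov_webE_0 x y hu hv hD, aCov_webE_1 x y hu hv hD,
      Gam_webE_01k x y hu hv hD, Gam_webE_110 x y hu hv hD,
      Matrix.cons_val', Matrix.cons_val_zero, Matrix.cons_val_one,
      Matrix.head_cons, Matrix.empty_val', Matrix.cons_val_fin_one, Matrix.head_fin_const, Matrix.of_apply]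
    field_simp
    ring
  have Q00 : qCov webE 0 0 x y =
      -((1 / ((1 + y 0) * (1 - x 0 * x 1))) *
        ((1 / ((1 + y 1) * (1 - x 0 * x 1))) * x 1 + 1 / ((1 + y 0) * (1 - x 0 * x 1)))) := by
    simp only [qCov]
    simp only [Fin.sum_univ_two, pdy_a0_0 x y h1 h2 h3, pdy_a0_1 x y h1 h2 h3,
      ftil_inv_webE x y hD, aCov_webE_0 x y hu hv hD, aCov_webE_1 x y hu hv hD,
      Gam_webE_000 x y hu hv hD, Gam_webE_10k x y hu hv hD,
      Matrix.cons_val', Matrix.cons_val_zero, Matrix.cons_val_one,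
      Matrix.head_cons, Matrix.empty_val', Matrix.cons_val_fin_one, Matrix.head_fin_const, Matrix.of_apply]
    field_simp
    ring
  have Q11 : qCov webE 1 1 x y =
      -((1 / ((1 + y 1) * (1 - x 0 * x 1))) *
        ((1 / ((1 + y 0) * (1 - x 0 * x 1))) * x 0 + 1 / ((1 + y 1) * (1 - x 0 * x 1)))) := by
    simp only [qCov]
    simp only [Fin.sum_univ_two, pdy_a1_0 x y h1 h2 h3, pdy_a1_1 x y h1 h2 h3,
      ftil_inv_webE x y hD, aCov_webE_0 x y hu hv hD, aCov_webE_1 x y hu hv hD,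
      Gam_webE_01k x y hu hv hD, Gam_webE_111 x y hu hv hD,
      Matrix.cons_val', Matrix.cons_val_zero, Matrix.cons_val_one,
      Matrix.head_cons, Matrix.empty_val', Matrix.cons_val_fin_one, Matrix.head_fin_const, Matrix.of_apply]
    field_simp
    ring
  refine ⟨P00, P11, P01, Q01, P10, Q10, Q00, Q11, ?_, ?_⟩
  · rw [pIso, P01, P10]
    field_simp
    ring
  · rw [qIso, Q01, Q10]
    field_simp
    ring


end
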